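/- Let λ be Lebesgue measure on [0,1], let m, k ∈ ℕ, and let A ⊆ [0,1] be a finite union of dyadic intervals of length 2^{-km}. Let E ⊆ [0,1] be the set obtained by taking a Borel set S ⊆ [0,1], scaling it by 2^{-km}, and placing a translated copy into each dyadic interval of length 2^{-km} (i.e., E = ⋃_{j=0}^{2^{km}−1} (j·2^{-km} + 2^{-km}·S)). Then λ(E ∩ A) = λ(E)·λ(A). -/

import Mathlib

open MeasureTheory Set Pointwise ENNReal

lemma aux_Icc_null {ε : ℝ} (hε : 0 < ε) {i j : ℕ} (hij : i ≠ j) :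
    volume (Icc ((i:ℝ)*ε) (((i:ℝ)+1)*ε) ∩ Icc ((j:ℝ)*ε) (((j:ℝ)+1)*ε)) = 0 := by
  rw [Set.Icc_inter_Icc, Real.volume_Icc, ENNReal.ofReal_eq_zero, sub_nonpos]
  rcases hij.lt_or_gt with h | h
  · have h1 : ((i:ℝ)+1) ≤ (j:ℝ) := by exact_mod_cast h
    have h2 : ((i:ℝ)+1)*ε ≤ (j:ℝ)*ε := by nlinarith
    exact le_trans inf_le_left (le_trans h2 le_sup_right)
  · have h1 : ((j:ℝ)+1) ≤ (i:ℝ) := by exact_mod_cast h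
    have h2 : ((j:ℝ)+1)*ε ≤ (i:ℝ)*ε := by nlinarith
    exact le_trans inf_le_right (le_trans h2 le_sup_left)

lemma aux_vol_piece {ε : ℝ} (hε : 0 < ε) (c : ℝ) (S : Set ℝ) :
    volume ((fun x : ℝ => c + ε * x) '' S) = ENNReal.ofReal ε * volume S := by
  have himg : (fun x : ℝ => c + ε * x) '' S = c +ᵥ (ε • S) := by
    ext y
    simp only [Set.mem_image, Set.mem_vadd_set, Set.mem_smul_set, smul_eq_mul, vadd_eq_add]
    constructor
    · rintro ⟨x, hx, rfl⟩; exact ⟨ε * x, ⟨x, hx, rfl⟩, rfl⟩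
    · rintro ⟨_, ⟨x, hx, rfl⟩, rfl⟩; exact ⟨x, hx, rfl⟩
  rw [himg, measure_vadd, Measure.addHaar_smul_of_nonneg volume hε.le,
    Module.finrank_self, pow_one]

theorem stmt_12 (m k : ℕ) (S : Set ℝ) (hS : MeasurableSet S)
    (hSsub : S ⊆ Set.Icc 0 1)
    (A : Set ℝ) (t : Finset ℕ) (ht : ∀ j ∈ t, j < 2 ^ (k * m))
    (hA : A = ⋃ j ∈ t,
      Set.Icc ((j : ℝ) * (2 : ℝ) ^ (-(k * m : ℤ))) (((j : ℝ) + 1) * (2 : ℝ) ^ (-(k * m : ℤ))))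
    (E : Set ℝ)
    (hE : E = ⋃ j ∈ Finset.range (2 ^ (k * m)),
      (fun x : ℝ => (j : ℝ) * (2 : ℝ) ^ (-(k * m : ℤ)) + (2 : ℝ) ^ (-(k * m : ℤ)) * x) '' S) :
    volume (E ∩ A) = volume E * volume A := by
  set ε : ℝ := (2 : ℝ) ^ (-(k * m : ℤ)) with hεdef
  have hε : 0 < ε := by positivity
  set n : ℕ := 2 ^ (k * m) with hn
  set P : ℕ → Set ℝ := fun j => (fun x : ℝ => (j:ℝ)*ε + ε*x) '' S with hP
  set I : ℕ → Set ℝ := fun j => Icc ((j:ℝ)*ε) (((j:ℝ)+1)*ε) with hI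
  have hPI : ∀ j, P j ⊆ I j := by
    intro j
    rintro _ ⟨x, hx, rfl⟩
    obtain ⟨h0, h1⟩ := hSsub hx
    constructor <;> simp <;> nlinarith
  have hPmeas : ∀ j, MeasurableSet (P j) := by
    intro j
    have heq : P j = (fun y : ℝ => (y - (j:ℝ)*ε)/ε) ⁻¹' S := by
      ext y
      simp only [hP, Set.mem_image, Set.mem_preimage]
      constructor
      · rintro ⟨x, hx, rfl⟩
        have : ((j:ℝ)*ε + ε*x - (j:ℝ)*ε)/ε = x := by field_simp; ring
        rwa [this]
      · intro hy
        exact ⟨(y - (j:ℝ)*ε)/ε, hy, by field_simp; ring⟩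
    rw [heq]
    exact hS.preimage ((measurable_id.sub_const _).div_const _)
  have hvolP : ∀ j : ℕ, volume (P j) = ENNReal.ofReal ε * volume S := fun j =>
    aux_vol_piece hε _ S
  have hvolI : ∀ j : ℕ, volume (I j) = ENNReal.ofReal ε := by
    intro j
    rw [hI]
    simp only [Real.volume_Icc]
    congr 1
    ring
  have hInull : ∀ i j : ℕ, i ≠ j → volume (I i ∩ I j) = 0 := fun i j hij =>
    aux_Icc_null hε hij
  have hPnull : ∀ i j : ℕ, i ≠ j → volume (P i ∩ P j) = 0 := fun i j hij =>
    measure_mono_null (Set.inter_subset_inter (hPI i) (hPI j)) (hInull i j hij)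
  -- volume of E
  have hvolE : volume E = volume S := by
    rw [hE]
    rw [measure_biUnion_finset₀ (fun i _ j _ hij => hPnull i j hij)
      (fun j _ => (hPmeas j).nullMeasurableSet)]
    simp only [hvolP, Finset.sum_const, Finset.card_range, nsmul_eq_mul]
    have hone : (n : ℝ≥0∞) * ENNReal.ofReal ε = 1 := by
      rw [← ENNReal.ofReal_natCast, ← ENNReal.ofReal_mul (by positivity)]
      have : (n : ℝ) * ε = 1 := by
        rw [hεdef, hn]
        push_cast
        rw [← zpow_natCast (2:ℝ) (k*m), ← zpow_add₀ (two_ne_zero : (2:ℝ) ≠ 0)]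
        norm_num
      rw [this, ENNReal.ofReal_one]
    rw [← mul_assoc, hone, one_mul]
  -- volume of A
  have hvolA : volume A = (t.card : ℝ≥0∞) * ENNReal.ofReal ε := by
    rw [hA]
    rw [measure_biUnion_finset₀ (fun i _ j _ hij => hInull i j hij)
      (fun j _ => measurableSet_Icc.nullMeasurableSet)]
    simp only [hvolI, Finset.sum_const, nsmul_eq_mul]
  -- E ∩ A
  set U : Set ℝ := ⋃ j ∈ t, P j with hU
  have hUsub : U ⊆ E ∩ A := by
    intro x hx
    obtain ⟨j, hjt, hxj⟩ := Set.mem_iUnion₂.mp hx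
    constructor
    · rw [hE]
      exact Set.mem_iUnion₂.mpr ⟨j, Finset.mem_range.mpr (ht j hjt), hxj⟩
    · rw [hA]
      exact Set.mem_iUnion₂.mpr ⟨j, hjt, hPI j hxj⟩
  have hnull : volume ((E ∩ A) \ U) = 0 := by
    have hsub : (E ∩ A) \ U ⊆
        ⋃ p ∈ (Finset.range n ×ˢ t).filter (fun p => p.1 ≠ p.2), I p.1 ∩ I p.2 := by
      rintro x ⟨⟨hxE, hxA⟩, hxU⟩
      rw [hE] at hxE
      rw [hA] at hxA
      obtain ⟨i, hi, hxi⟩ := Set.mem_iUnion₂.mp hxE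
      obtain ⟨j, hj, hxj⟩ := Set.mem_iUnion₂.mp hxA
      have hij : i ≠ j := by
        rintro rfl
        exact hxU (Set.mem_iUnion₂.mpr ⟨i, hj, hxi⟩)
      exact Set.mem_iUnion₂.mpr ⟨(i, j),
        Finset.mem_filter.mpr ⟨Finset.mem_product.mpr ⟨hi, hj⟩, hij⟩,
        ⟨hPI i hxi, hxj⟩⟩
    refine measure_mono_null hsub ?_
    refine (measure_biUnion_null_iff ((Finset.countable_toSet _))).mpr ?_
    rintro ⟨i, j⟩ hp
    simp only [Finset.coe_filter, Set.mem_setOf_eq] at hp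
    exact hInull i j hp.2
  have hEAU : volume (E ∩ A) = volume U := by
    rw [← measure_diff_null (s := E ∩ A) hnull, Set.diff_diff_right_self,
      Set.inter_eq_self_of_subset_right hUsub]
  have hvolU : volume U = (t.card : ℝ≥0∞) * (ENNReal.ofReal ε * volume S) := by
    rw [hU, measure_biUnion_finset₀ (fun i _ j _ hij => hPnull i j hij)
      (fun j _ => (hPmeas j).nullMeasurableSet)]
    simp only [hvolP, Finset.sum_const, nsmul_eq_mul]
  rw [hEAU, hvolU, hvolE, hvolA]
  ring
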